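/- Let p be a prime and let G be a finitely generated group. Then for every n ≥ 1 the quotient G/γ_n^p G is a finite p-group. -/

import Mathlib

/-! Common definitions following the paper "Residual p properties of mapping class groups
and surface groups" by L. Paris. -/

/-- The commutator `[g,h] = g⁻¹h⁻¹gh`. -/
def commAB {G : Type*} [Group G] (g h : G) : G := g⁻¹ * h⁻¹ * g * h

/-- The commutator subgroup `[K,H]`, generated by all `[g,h]` with `g ∈ K`, `h ∈ H`. -/
def commSub {G : Type*} [Group G] (K H : Subgroup G) : Subgroup G :=
  Subgroup.closure {x | ∃ g ∈ K, ∃ h ∈ H, x = commAB g h}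

/-- The subgroup `[K,H]^p`, generated by all `[g,h]` (`g ∈ K`, `h ∈ H`) together with all
`h^p` (`h ∈ H`). -/
def pComm (p : ℕ) {G : Type*} [Group G] (K H : Subgroup G) : Subgroup G :=
  Subgroup.closure ({x | ∃ g ∈ K, ∃ h ∈ H, x = commAB g h} ∪ {x | ∃ h ∈ H, x = h ^ p})

/-- The lower `𝔽_p`-linear central filtration: `γ_1^p G = G` and
`γ_{n+1}^p G = [G, γ_n^p G]^p` (with the harmless convention `γ_0^p G = G`). -/
def gammaP (p : ℕ) (G : Type*) [Group G] : ℕ → Subgroup G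
  | 0 => ⊤
  | 1 => ⊤
  | n + 2 => pComm p ⊤ (gammaP p G (n + 1))

theorem pComm_top_normal (p : ℕ) {G : Type*} [Group G] {H : Subgroup G} (hH : H.Normal) :
    (pComm p ⊤ H).Normal := by
  constructor
  intro x hx g
  unfold pComm at hx ⊢
  induction hx using Subgroup.closure_induction with
  | mem y hy =>
    apply Subgroup.subset_closure
    rcases hy with ⟨a, -, h, hh, rfl⟩ | ⟨h, hh, rfl⟩
    · exact Or.inl ⟨g * a * g⁻¹, trivial, g * h * g⁻¹, hH.conj_mem h hh g,
        by unfold commAB; group⟩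
    · exact Or.inr ⟨g * h * g⁻¹, hH.conj_mem h hh g, (conj_pow).symm⟩
  | one => simpa using Subgroup.one_mem _
  | mul a b ha hb iha ihb =>
    have e : g * (a * b) * g⁻¹ = (g * a * g⁻¹) * (g * b * g⁻¹) := by group
    rw [e]; exact Subgroup.mul_mem _ iha ihb
  | inv a ha iha =>
    have e : g * a⁻¹ * g⁻¹ = (g * a * g⁻¹)⁻¹ := by group
    rw [e]; exact Subgroup.inv_mem _ iha

instance gammaP_normal (p : ℕ) (G : Type*) [Group G] : ∀ n, (gammaP p G n).Normal
  | 0 => by unfold gammaP; infer_instance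
  | 1 => by unfold gammaP; infer_instance
  | n + 2 => by unfold gammaP; exact pComm_top_normal p (gammaP_normal p G (n + 1))

/-- `G` is residually `p`: every nontrivial element survives in some finite `p`-group
quotient. -/
def IsResiduallyP (p : ℕ) (G : Type*) [Group G] : Prop :=
  ∀ g : G, g ≠ 1 → ∃ (P : Type) (_ : Group P) (_ : Finite P) (φ : G →* P),
    IsPGroup p P ∧ Function.Surjective φ ∧ φ g ≠ 1

/-- `G` is conjugacy `p`-separable. -/
def IsConjPSeparable (p : ℕ) (G : Type*) [Group G] : Prop :=
  ∀ g h : G, IsConj g h ∨ ∃ (P : Type) (_ : Group P) (_ : Finite P) (φ : G →* P),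
    IsPGroup p P ∧ Function.Surjective φ ∧ ¬ IsConj (φ g) (φ h)

/-- Property A: every automorphism of `G` preserving every conjugacy class is inner. -/
def PropertyA (G : Type*) [Group G] : Prop :=
  ∀ α : MulAut G, (∀ g : G, IsConj g (α g)) → α ∈ (MulAut.conj : G →* MulAut G).range

/-- `A_n`: the kernel of the natural homomorphism `Aut(G) → Aut(G/γ_{n+1}^p G)`, i.e. the
automorphisms acting trivially modulo `γ_{n+1}^p G`. -/
def An (p : ℕ) (G : Type*) [Group G] (n : ℕ) : Subgroup (MulAut G) where
  carrier := {α | ∀ g : G, g⁻¹ * α g ∈ gammaP p G (n + 1)}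
  one_mem' := by intro g; simpa using Subgroup.one_mem _
  mul_mem' := by
    intro a b ha hb g
    have e : g⁻¹ * (a * b) g = (g⁻¹ * b g) * ((b g)⁻¹ * a (b g)) := by
      rw [MulAut.mul_apply]; group
    rw [e]; exact Subgroup.mul_mem _ (hb g) (ha (b g))
  inv_mem' := by
    intro a ha g
    have h := ha ((a⁻¹ : MulAut G) g)
    rw [MulAut.apply_inv_self] at h
    have e : g⁻¹ * (a⁻¹ : MulAut G) g = (((a⁻¹ : MulAut G) g)⁻¹ * g)⁻¹ := by group
    rw [e]; exact Subgroup.inv_mem _ h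

theorem mem_An {p : ℕ} {G : Type*} [Group G] {n : ℕ} {α : MulAut G} :
    α ∈ An p G n ↔ ∀ g : G, g⁻¹ * α g ∈ gammaP p G (n + 1) := Iff.rfl

/-- `I_p(G)`: the kernel of the natural homomorphism `Aut(G) → Aut(G/γ_2^p G)`. -/
abbrev Ip (p : ℕ) (G : Type*) [Group G] : Subgroup (MulAut G) := An p G 1

/-- `Inn(G)`, viewed as a subgroup of `I_p(G)`. -/
def InnSub (p : ℕ) (G : Type*) [Group G] : Subgroup (Ip p G) :=
  Subgroup.comap (Ip p G).subtype (MulAut.conj : G →* MulAut G).range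

instance innSub_normal (p : ℕ) (G : Type*) [Group G] : (InnSub p G).Normal := by
  constructor
  rintro n hn g
  obtain ⟨x, hx⟩ := hn
  refine ⟨(g : MulAut G) x, ?_⟩
  have hx' : MulAut.conj x = (n : MulAut G) := hx
  show MulAut.conj ((g : MulAut G) x) = ((g * n * g⁻¹ : Ip p G) : MulAut G)
  ext y
  simp only [Subgroup.coe_mul, Subgroup.coe_inv, MulAut.mul_apply, MulAut.conj_apply, ← hx',
    map_mul, map_inv, MulAut.apply_inv_self]

/-- The surface relator `[x_1,y_1][x_2,y_2]⋯[x_ρ,y_ρ]` in the free group on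
`x_1, …, x_ρ, y_1, …, y_ρ`. -/
def surfaceRel (ρ : ℕ) : FreeGroup (Fin ρ ⊕ Fin ρ) :=
  (List.ofFn fun i : Fin ρ =>
    commAB (FreeGroup.of (Sum.inl i)) (FreeGroup.of (Sum.inr i))).prod

/-- The fundamental group of the closed oriented surface of genus `ρ`, given by the
presentation `⟨x_1, …, x_ρ, y_1, …, y_ρ | [x_1,y_1]⋯[x_ρ,y_ρ] = 1⟩`. -/
abbrev SurfaceGroup (ρ : ℕ) : Type :=
  PresentedGroup ({surfaceRel ρ} : Set (FreeGroup (Fin ρ ⊕ Fin ρ)))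

theorem pComm_le (p : ℕ) {G : Type*} [Group G] {H : Subgroup G} (hH : H.Normal) :
    pComm p ⊤ H ≤ H := by
  apply (Subgroup.closure_le _).mpr
  rintro x (⟨g, -, h, hh, rfl⟩ | ⟨h, hh, rfl⟩)
  · have : g⁻¹ * h⁻¹ * g ∈ H := by
      have := hH.conj_mem h⁻¹ (H.inv_mem hh) g⁻¹
      simpa [mul_assoc] using this
    exact H.mul_mem this hh
  · exact H.pow_mem hh p

theorem gammaP_succ_le (p : ℕ) (G : Type*) [Group G] (n : ℕ) :
    gammaP p G (n + 1) ≤ gammaP p G n := by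
  cases n with
  | zero => exact le_top
  | succ m =>
    cases m with
    | zero => exact le_top
    | succ k =>
      show pComm p ⊤ (gammaP p G (k + 2)) ≤ gammaP p G (k + 2)
      exact pComm_le p (gammaP_normal p G (k + 2))

theorem pow_mem_gammaP (p : ℕ) {G : Type*} [Group G] : ∀ (n : ℕ) (g : G),
    g ^ p ^ n ∈ gammaP p G (n + 1)
  | 0, g => by simp [gammaP]
  | n + 1, g => by
    have h := pow_mem_gammaP p n g
    have : g ^ p ^ (n + 1) = (g ^ p ^ n) ^ p := by rw [← pow_mul, pow_succ]
    rw [this]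
    exact Subgroup.subset_closure (Or.inr ⟨g ^ p ^ n, h, rfl⟩)

theorem finite_quotient_gammaP (p : ℕ) (hp : p ≠ 0) (G : Type*) [Group G] [Group.FG G] :
    ∀ n : ℕ, Finite (G ⧸ gammaP p G (n + 1))
  | 0 => by
    have h1 : gammaP p G (0 + 1) = ⊤ := rfl
    rw [h1]
    have : Subsingleton (G ⧸ (⊤ : Subgroup G)) := QuotientGroup.subsingleton_quotient_top
    exact Finite.of_subsingleton
  | n + 1 => by
    set H := gammaP p G (n + 1) with hHdef
    set K := gammaP p G (n + 2) with hKdef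
    haveI : Finite (G ⧸ H) := finite_quotient_gammaP p hp G n
    haveI : H.FiniteIndex := Subgroup.finiteIndex_of_finite_quotient
    haveI : Group.FG ↥H := Subgroup.fg_of_index_ne_zero H
    have hKH : K ≤ H := gammaP_succ_le p G (n + 1)
    haveI : K.Normal := gammaP_normal p G (n + 2)
    haveI : (K.subgroupOf H).Normal := Subgroup.normal_subgroupOf
    -- The quotient H ⧸ K.subgroupOf H is a f.g. abelian torsion group, hence finite.
    letI : CommGroup (H ⧸ K.subgroupOf H) :=
      { (inferInstance : Group (H ⧸ K.subgroupOf H)) with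
        mul_comm := by
          intro a b
          induction a using QuotientGroup.induction_on with | H a =>
          induction b using QuotientGroup.induction_on with | H b =>
          rw [← QuotientGroup.mk_mul, ← QuotientGroup.mk_mul, QuotientGroup.eq,
            Subgroup.mem_subgroupOf]
          have e : ((((a * b)⁻¹ * (b * a) : H)) : G) = commAB (b : G) (a : G) := by
            push_cast
            unfold commAB; group
          rw [e]
          exact Subgroup.subset_closure (Or.inl ⟨b, trivial, a, a.2, rfl⟩) }
    haveI : Group.FG (H ⧸ K.subgroupOf H) :=
      Group.fg_of_surjective (QuotientGroup.mk'_surjective (K.subgroupOf H))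
    have htor : Monoid.IsTorsion (H ⧸ K.subgroupOf H) := by
      intro a
      induction a using QuotientGroup.induction_on with | H a =>
      refine isOfFinOrder_iff_pow_eq_one.mpr ⟨p, Nat.pos_of_ne_zero hp, ?_⟩
      rw [← QuotientGroup.mk_pow, QuotientGroup.eq_one_iff, Subgroup.mem_subgroupOf]
      push_cast
      exact Subgroup.subset_closure (Or.inr ⟨a, a.2, rfl⟩)
    haveI hfin : Finite (H ⧸ K.subgroupOf H) := CommGroup.finite_of_fg_torsion _ htor
    have hrel : K.relIndex H ≠ 0 := by
      have : Finite (↥H ⧸ K.subgroupOf H) := hfin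
      exact Subgroup.index_ne_zero_of_finite
    have hKind : K.index ≠ 0 := by
      rw [← Subgroup.relIndex_mul_index hKH]
      exact Nat.mul_ne_zero hrel Subgroup.index_ne_zero_of_finite
    haveI : K.FiniteIndex := ⟨hKind⟩
    exact Subgroup.finite_quotient_of_finiteIndex

/-- For a finitely generated group `G`, each quotient `G/γ_n^p G` is a finite `p`-group. -/
theorem quotient_gammaP_finite_pGroup (p : ℕ) (hp : p.Prime) (G : Type*) [Group G]
    (hfg : Group.FG G) (n : ℕ) (hn : 1 ≤ n) :
    Finite (G ⧸ gammaP p G n) ∧ IsPGroup p (G ⧸ gammaP p G n) := by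
  obtain ⟨m, rfl⟩ : ∃ m, n = m + 1 := ⟨n - 1, by omega⟩
  haveI := hfg
  haveI : Finite (G ⧸ gammaP p G (m + 1)) := finite_quotient_gammaP p hp.ne_zero G m
  refine ⟨inferInstance, ?_⟩
  intro q
  induction q using QuotientGroup.induction_on with | H g =>
  refine ⟨m, ?_⟩
  rw [← QuotientGroup.mk_pow]
  exact (QuotientGroup.eq_one_iff _).mpr (pow_mem_gammaP p m g)
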